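/- (Many-to-one, maximum error.) Let K ≥ 2, let X be a countable type, and for each i ∈ {0,…,K−1} let Dᵢ be a probability distribution (PMF) on X and fᵢ* : X → Y a ground-truth translator into a countable type Y. Let Z be a measurable space and g : X → Z satisfy d_TV(g♯Dᵢ, g♯Dⱼ) ≤ ε for all i ≠ j. Then for every measurable decoder h : Z → Y, 2·max_{i} Pr_{X∼Dᵢ}(h(g(X)) ≠ fᵢ*(X)) ≥ max_{i≠j} d_TV(fᵢ*♯Dᵢ, fⱼ*♯Dⱼ) − ε. -/
import Mathlib


open MeasureTheory

/-- Total variation distance between two measures: supremum over measurable events of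
the absolute difference of the probabilities. -/
noncomputable def tvDist {α : Type*} [MeasurableSpace α] (P Q : Measure α) : ℝ :=
  ⨆ E : {s : Set α // MeasurableSet s}, |(P E.1).toReal - (Q E.1).toReal|

lemma abs_toReal_measure_sub_le {α : Type*} [MeasurableSpace α] (μ : Measure α)
    [IsFiniteMeasure μ] (A B C : Set α) (hAB : A \ B ⊆ C) (hBA : B \ A ⊆ C) :
    |(μ A).toReal - (μ B).toReal| ≤ (μ C).toReal := by
  have h1 : (μ A).toReal ≤ (μ B).toReal + (μ C).toReal := by
    have : μ A ≤ μ B + μ C := by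
      calc μ A ≤ μ (B ∪ C) := measure_mono (fun x hx => by
              by_cases hb : x ∈ B
              · exact Or.inl hb
              · exact Or.inr (hAB ⟨hx, hb⟩))
        _ ≤ μ B + μ C := measure_union_le _ _
    have := ENNReal.toReal_mono (by finiteness) this
    rwa [ENNReal.toReal_add (measure_ne_top _ _) (measure_ne_top _ _)] at this
  have h2 : (μ B).toReal ≤ (μ A).toReal + (μ C).toReal := by
    have : μ B ≤ μ A + μ C := by
      calc μ B ≤ μ (A ∪ C) := measure_mono (fun x hx => by
              by_cases ha : x ∈ A
              · exact Or.inl ha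
              · exact Or.inr (hBA ⟨hx, ha⟩))
        _ ≤ μ A + μ C := measure_union_le _ _
    have := ENNReal.toReal_mono (by finiteness) this
    rwa [ENNReal.toReal_add (measure_ne_top _ _) (measure_ne_top _ _)] at this
  rw [abs_sub_le_iff]
  constructor <;> linarith

lemma tvDist_bddAbove {α : Type*} [MeasurableSpace α] (P Q : Measure α)
    [IsProbabilityMeasure P] [IsProbabilityMeasure Q] :
    BddAbove (Set.range fun E : {s : Set α // MeasurableSet s} =>
      |(P E.1).toReal - (Q E.1).toReal|) := by
  refine ⟨2, ?_⟩
  rintro x ⟨E, rfl⟩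
  have hP : (P E.1).toReal ≤ 1 := by
    rw [← ENNReal.toReal_one]
    exact ENNReal.toReal_mono (by simp) prob_le_one
  have hQ : (Q E.1).toReal ≤ 1 := by
    rw [← ENNReal.toReal_one]
    exact ENNReal.toReal_mono (by simp) prob_le_one
  have h0P : 0 ≤ (P E.1).toReal := ENNReal.toReal_nonneg
  have h0Q : 0 ≤ (Q E.1).toReal := ENNReal.toReal_nonneg
  rw [abs_sub_le_iff]
  constructor <;> linarith

/-- Many-to-one, maximum error: twice the maximum translation error over the `K` source
languages is at least the maximum pairwise total variation distance between the target
marginals, minus `ε`. -/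
theorem many_to_one_max_lower_bound {X Y Z : Type*}
    [Countable X] [MeasurableSpace X] [DiscreteMeasurableSpace X]
    [Countable Y] [MeasurableSpace Y] [DiscreteMeasurableSpace Y]
    [MeasurableSpace Z]
    (K : ℕ) (hK : 2 ≤ K)
    (D : Fin K → PMF X) (f : Fin K → X → Y) (g : X → Z) (ε : ℝ)
    (hg : ∀ i j, i ≠ j →
      tvDist ((D i).map g).toMeasure ((D j).map g).toMeasure ≤ ε)
    {h : Z → Y} (hh : Measurable h) :
    2 * (⨆ i : Fin K, ((D i).toMeasure {x | h (g x) ≠ f i x}).toReal)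
      ≥ (⨆ p : {p : Fin K × Fin K // p.1 ≠ p.2},
          tvDist ((D p.1.1).map (f p.1.1)).toMeasure
            ((D p.1.2).map (f p.1.2)).toMeasure) - ε := by
  haveI : Nonempty {p : Fin K × Fin K // p.1 ≠ p.2} :=
    ⟨⟨(⟨0, by omega⟩, ⟨1, by omega⟩), by simp [Fin.ext_iff]⟩⟩
  set S : ℝ := ⨆ i : Fin K, ((D i).toMeasure {x | h (g x) ≠ f i x}).toReal with hS
  rw [ge_iff_le, sub_le_iff_le_add]
  apply ciSup_le
  rintro ⟨⟨i, j⟩, hij⟩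
  simp only [tvDist]
  apply ciSup_le
  rintro ⟨E, hE⟩
  have hfm : ∀ k : Fin K, Measurable (f k) := fun k => .of_discrete
  have hgm : Measurable g := .of_discrete
  -- Rewrite pushforward measures
  rw [PMF.toMeasure_map_apply _ _ _ (hfm i) hE, PMF.toMeasure_map_apply _ _ _ (hfm j) hE]
  set a := ((D i).toMeasure ((f i) ⁻¹' E)).toReal
  set b := ((D j).toMeasure ((f j) ⁻¹' E)).toReal
  set a' := ((D i).toMeasure ((fun x => h (g x)) ⁻¹' E)).toReal
  set b' := ((D j).toMeasure ((fun x => h (g x)) ⁻¹' E)).toReal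
  have herr : ∀ k : Fin K,
      |((D k).toMeasure ((f k) ⁻¹' E)).toReal -
        ((D k).toMeasure ((fun x => h (g x)) ⁻¹' E)).toReal|
        ≤ ((D k).toMeasure {x | h (g x) ≠ f k x}).toReal := by
    intro k
    apply abs_toReal_measure_sub_le
    · rintro x ⟨hx1, hx2⟩
      simp only [Set.mem_preimage] at hx1 hx2
      intro hcontra
      exact hx2 (hcontra ▸ hx1)
    · rintro x ⟨hx1, hx2⟩
      simp only [Set.mem_preimage] at hx1 hx2
      intro hcontra
      exact hx2 (hcontra ▸ hx1)
  have hmid : |a' - b'| ≤ ε := by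
    have hmeas : MeasurableSet (h ⁻¹' E) := hh hE
    have hEq : ∀ k : Fin K, ((D k).toMeasure ((fun x => h (g x)) ⁻¹' E)).toReal
        = (((D k).map g).toMeasure (h ⁻¹' E)).toReal := by
      intro k
      rw [PMF.toMeasure_map_apply _ _ _ hgm hmeas]
      rfl
    have hle : |(((D i).map g).toMeasure (h ⁻¹' E)).toReal -
        (((D j).map g).toMeasure (h ⁻¹' E)).toReal|
        ≤ tvDist ((D i).map g).toMeasure ((D j).map g).toMeasure := by
      exact le_ciSup (tvDist_bddAbove _ _) (⟨h ⁻¹' E, hmeas⟩ :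
        {s : Set Z // MeasurableSet s})
    simp only [a', b', hEq]
    exact hle.trans (hg i j hij)
  have hSi : ((D i).toMeasure {x | h (g x) ≠ f i x}).toReal ≤ S := by
    rw [hS]
    exact le_ciSup (Finite.bddAbove_range
      (fun k : Fin K => ((D k).toMeasure {x | h (g x) ≠ f k x}).toReal)) i
  have hSj : ((D j).toMeasure {x | h (g x) ≠ f j x}).toReal ≤ S := by
    rw [hS]
    exact le_ciSup (Finite.bddAbove_range
      (fun k : Fin K => ((D k).toMeasure {x | h (g x) ≠ f k x}).toReal)) j
  have hi := herr i
  have hj := herr j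
  have htri : |a - b| ≤ |a - a'| + |a' - b'| + |b' - b| := by
    calc |a - b| = |(a - a') + (a' - b') + (b' - b)| := by ring_nf
      _ ≤ |(a - a') + (a' - b')| + |b' - b| := abs_add_le _ _
      _ ≤ |a - a'| + |a' - b'| + |b' - b| := by
          gcongr; exact abs_add_le _ _
  have : |b' - b| = |b - b'| := abs_sub_comm _ _
  linarith [htri, hi, hj, hmid, this ▸ (le_refl |b' - b|)]
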